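/- Suppose the sequence (v^n)_{n≥0} solves the discrete wave scheme with source (r^n)_{n≥1}. Then for every n ≥ 1 the one-step discrete energy identity holds: E^{n+1/2}(v) − E^{n−1/2}(v) = τ · ⟨r^n, (v^{n+1} − v^{n−1})/(2τ)⟩. -/

import Mathlib

open RealInnerProductSpace

/-- The discrete energy `E^{n+1/2}(v)` of the leapfrog scheme:
`E^{n+1/2}(v) = (1/2)‖π((v^{n+1}−v^n)/τ)‖² − (τ²/8) a((v^{n+1}−v^n)/τ, (v^{n+1}−v^n)/τ)
  + (1/2) a((v^{n+1}+v^n)/2, (v^{n+1}+v^n)/2)`. -/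
noncomputable def discE {H : Type*} [NormedAddCommGroup H] [InnerProductSpace ℝ H]
    (W : Submodule ℝ H) [Submodule.HasOrthogonalProjection W]
    (a : H →ₗ[ℝ] H →ₗ[ℝ] ℝ) (τ : ℝ) (v : ℕ → H) (n : ℕ) : ℝ :=
  (1 / 2) * ‖(Submodule.orthogonalProjectionOnto W (τ⁻¹ • (v (n + 1) - v n)) : H)‖ ^ 2
    - (τ ^ 2 / 8) * a (τ⁻¹ • (v (n + 1) - v n)) (τ⁻¹ • (v (n + 1) - v n))
    + (1 / 2) * a ((2 : ℝ)⁻¹ • (v (n + 1) + v n)) ((2 : ℝ)⁻¹ • (v (n + 1) + v n))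

/-- One-step discrete energy identity:
`E^{n+1/2}(v) − E^{n−1/2}(v) = τ ⟨r^n, (v^{n+1} − v^{n−1})/(2τ)⟩`. -/
theorem one_step_energy_identity
    {H : Type*} [NormedAddCommGroup H] [InnerProductSpace ℝ H]
    (W V : Submodule ℝ H) [Submodule.HasOrthogonalProjection W]
    (a : H →ₗ[ℝ] H →ₗ[ℝ] ℝ) (hsymm : ∀ u w : H, a u w = a w u)
    (τ : ℝ) (hτ : 0 < τ)
    (v r : ℕ → H) (hvV : ∀ n, v n ∈ V)
    (hscheme : ∀ n, 1 ≤ n → ∀ w ∈ V,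
      ⟪(Submodule.orthogonalProjectionOnto W ((τ ^ 2)⁻¹ • (v (n + 1) - 2 • v n + v (n - 1))) : H),
        (Submodule.orthogonalProjectionOnto W w : H)⟫ + a (v n) w = ⟪r n, w⟫)
    (n : ℕ) (hn : 1 ≤ n) :
    discE W a τ v n - discE W a τ v (n - 1)
      = τ * ⟪r n, (2 * τ)⁻¹ • (v (n + 1) - v (n - 1))⟫ := by
  have hn1 : n - 1 + 1 = n := Nat.sub_add_cancel hn
  have h := hscheme n hn (v (n + 1) - v (n - 1)) (sub_mem (hvV _) (hvV _))
  have hτ' : τ ≠ 0 := hτ.ne'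
  set p := v (n + 1)
  set q := v n
  set m := v (n - 1)
  have sPp := real_inner_comm ((Submodule.orthogonalProjectionOnto W p : H)) ((Submodule.orthogonalProjectionOnto W q : H))
  have sPm := real_inner_comm ((Submodule.orthogonalProjectionOnto W p : H)) ((Submodule.orthogonalProjectionOnto W m : H))
  have sQm := real_inner_comm ((Submodule.orthogonalProjectionOnto W q : H)) ((Submodule.orthogonalProjectionOnto W m : H))
  have apq := hsymm p q
  have apm := hsymm p m
  have aqm := hsymm q m
  simp only [discE, hn1, ← real_inner_self_eq_norm_sq, two_smul, map_sub, map_add, map_smul,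
    inner_sub_left, inner_sub_right, inner_add_left, inner_add_right,
    real_inner_smul_left, real_inner_smul_right,
    LinearMap.map_sub, LinearMap.map_add, LinearMap.map_smul, LinearMap.sub_apply,
    LinearMap.add_apply, LinearMap.smul_apply, smul_eq_mul, smul_sub, smul_add,
    Submodule.coe_smul, Submodule.coe_add, AddSubgroupClass.coe_sub] at h ⊢
  field_simp at h ⊢
  linear_combination 32 * h + 32 * sPp - 32 * sPm + 32 * sQm + (16*τ^2) * apq + (16*τ^2) * aqm
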